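/- Let c_1, c_2, d_1, d_2 be strictly decreasing words (column words) over {1,...,n} such that the multiset union of letters of c_1 c_2 equals that of d_1 d_2. Suppose there is a letter i such that: (I) i occurs in c_1 but not c_2, i occurs in d_2 but not d_1, and apart from the placement of i the pairs agree (c_1 with i removed equals d_1, and c_2 with i inserted equals d_2); (II) if i' denotes the greatest letter strictly smaller than i occurring in c_1 c_2, then c_2 contains i'; and (III) whenever c_2 contains a letter z > i, the word c_1 contains some letter z' with i < z' ≤ z. Then for all 1 ≤ p ≤ q ≤ n, the maximum length of a weakly increasing subsequence with entries in [p,q] is the same in c_1 c_2 as in d_1 d_2. -/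

import Mathlib

/-- The maximum length of a weakly increasing subsequence of `w` all of whose
letters lie in the interval `[p, q]`. -/
def wis (w : List ℕ) (p q : ℕ) : ℕ :=
  ((w.sublists.filter (fun s => decide (s.Pairwise (· ≤ ·) ∧ ∀ a ∈ s, p ≤ a ∧ a ≤ q))).map
    List.length).foldr max 0

lemma foldr_max_le {L : List ℕ} {m : ℕ} (h : ∀ x ∈ L, x ≤ m) : L.foldr max 0 ≤ m := by
  induction L with
  | nil => simp
  | cons a t ih => simp_all

lemma le_foldr_max {L : List ℕ} {x : ℕ} (h : x ∈ L) : x ≤ L.foldr max 0 := by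
  induction L with
  | nil => simp at h
  | cons a t ih =>
    simp only [List.foldr_cons]
    rcases List.mem_cons.1 h with rfl | h
    · exact le_max_left _ _
    · exact le_max_of_le_right (ih h)

lemma le_wis {w s : List ℕ} {p q : ℕ} (hs : s.Sublist w) (hsort : s.Pairwise (· ≤ ·))
    (hr : ∀ a ∈ s, p ≤ a ∧ a ≤ q) : s.length ≤ wis w p q := by
  apply le_foldr_max
  simp only [List.mem_map, List.mem_filter, List.mem_sublists]
  exact ⟨s, ⟨hs, by simp only [decide_eq_true_eq]; exact ⟨hsort, hr⟩⟩, rfl⟩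

lemma wis_le {w : List ℕ} {p q m : ℕ}
    (h : ∀ s : List ℕ, s.Sublist w → s.Pairwise (· ≤ ·) → (∀ a ∈ s, p ≤ a ∧ a ≤ q) → s.length ≤ m) :
    wis w p q ≤ m := by
  apply foldr_max_le
  intro x hx
  simp only [List.mem_map, List.mem_filter, List.mem_sublists, decide_eq_true_eq] at hx
  obtain ⟨s, ⟨hs, hsort, hr⟩, rfl⟩ := hx
  exact h s hs hsort hr

lemma short {s : List ℕ} (h1 : s.Pairwise (· ≤ ·)) (h2 : s.Pairwise (· > ·)) : s.length ≤ 1 := by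
  match s with
  | [] => simp
  | [_] => simp
  | a :: b :: t =>
    simp only [List.pairwise_cons] at h1 h2
    have := h1.1 b (by simp)
    have := h2.1 b (by simp)
    omega

lemma key {p q : ℕ} {u1 u2 v1 v2 : List ℕ} (hu1 : u1.Pairwise (· > ·)) (hu2 : u2.Pairwise (· > ·))
    (hmem : ∀ a ∈ u1 ++ u2, a ∈ v1 ++ v2)
    (hpair : ∀ a ∈ u1, ∀ b ∈ u2, p ≤ a → a ≤ b → b ≤ q →
      ∃ a' ∈ v1, ∃ b' ∈ v2, p ≤ a' ∧ a' ≤ b' ∧ b' ≤ q) :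
    wis (u1 ++ u2) p q ≤ wis (v1 ++ v2) p q := by
  apply wis_le
  intro s hs hsort hr
  rw [List.sublist_append_iff] at hs
  obtain ⟨s1, s2, rfl, h1, h2⟩ := hs
  have l1 : s1.length ≤ 1 :=
    short (hsort.sublist (List.sublist_append_left s1 s2)) (hu1.sublist h1)
  have l2 : s2.length ≤ 1 :=
    short (hsort.sublist (List.sublist_append_right s1 s2)) (hu2.sublist h2)
  match s1, s2 with
  | [], [] => simp
  | [], [b] =>
    have hb : b ∈ v1 ++ v2 := hmem b (List.mem_append_right _ (h2.mem (by simp)))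
    have := le_wis (w := v1 ++ v2) (p := p) (q := q) (List.singleton_sublist.2 hb)
      (by simp) (by simpa using hr b (by simp))
    simpa using this
  | [a], [] =>
    have ha : a ∈ v1 ++ v2 := hmem a (List.mem_append_left _ (h1.mem (by simp)))
    have := le_wis (w := v1 ++ v2) (p := p) (q := q) (List.singleton_sublist.2 ha)
      (by simp) (by simpa using hr a (by simp))
    simpa using this
  | [a], [b] =>
    have hab : a ≤ b := by
      have := hsort
      simp only [List.singleton_append, List.pairwise_cons] at this
      exact this.1 b (by simp)
    have hra := hr a (by simp)
    have hrb := hr b (by simp)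
    obtain ⟨a', ha', b', hb', hpa, hab', hbq⟩ :=
      hpair a (h1.mem (by simp)) b (h2.mem (by simp)) hra.1 hab hrb.2
    have hsub : [a', b'].Sublist (v1 ++ v2) := by
      have h : ([a'] ++ [b']).Sublist (v1 ++ v2) :=
        (List.singleton_sublist.2 ha').append (List.singleton_sublist.2 hb')
      simpa using h
    have hrr : ∀ x ∈ [a', b'], p ≤ x ∧ x ≤ q := by
      intro x hx
      simp only [List.mem_cons, List.mem_singleton, List.not_mem_nil, or_false] at hx
      rcases hx with rfl | rfl
      · exact ⟨hpa, le_trans hab' hbq⟩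
      · exact ⟨le_trans hpa hab', hbq⟩
    have := le_wis (w := v1 ++ v2) (p := p) (q := q) hsub (by simp [hab']) hrr
    simpa using this

theorem stmt15 (n : ℕ) (c1 c2 d1 d2 : List ℕ)
    (hc1 : c1.Pairwise (· > ·)) (hc2 : c2.Pairwise (· > ·))
    (hd1 : d1.Pairwise (· > ·)) (hd2 : d2.Pairwise (· > ·))
    (hc1n : c1 ≠ []) (hc2n : c2 ≠ []) (hd1n : d1 ≠ []) (hd2n : d2 ≠ [])
    (halph : ∀ a ∈ c1 ++ c2 ++ d1 ++ d2, 1 ≤ a ∧ a ≤ n)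
    (hperm : (c1 ++ c2).Perm (d1 ++ d2))
    (i : ℕ)
    (hic1 : i ∈ c1) (hic2 : i ∉ c2) (hid2 : i ∈ d2) (hid1 : i ∉ d1)
    (hmove1 : c1.erase i = d1) (hmove2 : d2.erase i = c2)
    (i' : ℕ) (hi'mem : i' ∈ c1 ++ c2) (hi'lt : i' < i)
    (hi'max : ∀ a ∈ c1 ++ c2, a < i → a ≤ i')
    (hII : i' ∈ c2)
    (hIII : ∀ z ∈ c2, i < z → ∃ z' ∈ c1, i < z' ∧ z' ≤ z) :
    ∀ p q : ℕ, 1 ≤ p → p ≤ q → q ≤ n →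
      wis (c1 ++ c2) p q = wis (d1 ++ d2) p q := by
  intro p q _ _ _
  have hd1c1 : ∀ a ∈ d1, a ∈ c1 := by
    intro a ha; rw [← hmove1] at ha; exact List.erase_subset ha
  have hc2d2 : ∀ b ∈ c2, b ∈ d2 := by
    intro b hb; rw [← hmove2] at hb; exact List.erase_subset hb
  apply le_antisymm
  · apply key hc1 hc2 (fun a ha => hperm.mem_iff.1 ha)
    intro a ha b hb hpa hab hbq
    by_cases hai : a = i
    · subst hai
      have hbi : a < b := lt_of_le_of_ne hab (fun h => hic2 (h ▸ hb))
      obtain ⟨z', hz', hiz', hz'b⟩ := hIII b hb hbi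
      have hz'd1 : z' ∈ d1 := by
        rw [← hmove1]
        exact (List.mem_erase_of_ne (by omega)).2 hz'
      exact ⟨z', hz'd1, b, hc2d2 b hb, le_trans hpa (le_of_lt hiz'), hz'b, hbq⟩
    · have had1 : a ∈ d1 := by
        rw [← hmove1]; exact (List.mem_erase_of_ne hai).2 ha
      exact ⟨a, had1, b, hc2d2 b hb, hpa, hab, hbq⟩
  · apply key hd1 hd2 (fun a ha => hperm.symm.mem_iff.1 ha)
    intro a ha b hb hpa hab hbq
    by_cases hbi : b = i
    · subst hbi
      have hac1 : a ∈ c1 := hd1c1 a ha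
      have hai : a < b := lt_of_le_of_ne hab (fun h => hid1 (h ▸ ha))
      have hai' : a ≤ i' := hi'max a (List.mem_append_left _ hac1) hai
      exact ⟨a, hac1, i', hII, hpa, hai', le_trans (le_of_lt hi'lt) hbq⟩
    · have hbc2 : b ∈ c2 := by
        rw [← hmove2]; exact (List.mem_erase_of_ne hbi).2 hb
      exact ⟨a, hd1c1 a ha, b, hbc2, hpa, hab, hbq⟩
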